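/- For every heavy directed edge (v,w) of G (i.e., d(v) > θ and w a neighbor of v), the probability that Algorithm 1 outputs (v,w) equals exactly (2/3) · (d_ℓ(v)/d(v)) · (1/(nθ)), where θ = ⌈√(6m)⌉ and d_ℓ(v) is the number of light neighbors of v. -/

import Mathlib

open scoped ENNReal

private lemma algA {V : Type*} [Fintype V] [DecidableEq V]
    (G : SimpleGraph V) [DecidableRel G.Adj] (v w x : V) (hvw : G.Adj v w)
    (hx : (G.neighborFinset x).Nonempty) :
    ((PMF.uniformOfFinset (G.neighborFinset x) hx).bind
        fun w' => PMF.pure (some (x, w'))) (some (v, w))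
      = if x = v then ((G.degree v : ℝ≥0∞))⁻¹ else 0 := by
  rw [PMF.bind_apply]
  split_ifs with hxv
  · subst hxv
    rw [tsum_eq_single w]
    · rw [PMF.uniformOfFinset_apply, if_pos ((SimpleGraph.mem_neighborFinset G x w).mpr hvw),
        PMF.pure_apply, if_pos rfl, mul_one, SimpleGraph.card_neighborFinset_eq_degree]
    · intro b hb
      rw [PMF.pure_apply, if_neg (by simpa [eq_comm] using hb), mul_zero]
  · refine ENNReal.tsum_eq_zero.mpr fun b => ?_
    rw [PMF.pure_apply, if_neg (fun h => hxv (by cases h; rfl)), mul_zero]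

private lemma algB {V : Type*} [Fintype V] [DecidableEq V]
    (G : SimpleGraph V) [DecidableRel G.Adj] (θ : ℕ) (nbr : V → ℕ → V)
    (v w : V) (hvw : G.Adj v w) (hheavy : θ < G.degree v)
    (hp : (1 / 3 : NNReal) ≤ 1) (u : V) (j : ℕ) :
    ((PMF.bernoulli (1 / 3) hp).bind fun B =>
        if θ < G.degree u ∨ G.degree u ≤ j then PMF.pure none
        else
          if B then PMF.pure (some (u, nbr u j))
          else
            if h : θ < G.degree (nbr u j) then
              (PMF.uniformOfFinset (G.neighborFinset (nbr u j))
                (Finset.card_pos.mp (Nat.lt_of_le_of_lt (Nat.zero_le θ) h))).bind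
                fun w => PMF.pure (some (nbr u j, w))
            else PMF.pure none) (some (v, w))
    = if G.degree u ≤ θ ∧ j < G.degree u ∧ nbr u j = v
        then 2 / 3 * (G.degree v : ℝ≥0∞)⁻¹ else 0 := by
  have hadd : (2 / 3 + 1 / 3 : ℝ≥0∞) = 1 := by
    rw [ENNReal.div_add_div_same, show (2 + 1 : ℝ≥0∞) = 3 by norm_num,
      ENNReal.div_self (by norm_num) (by norm_num)]
  have hsub : ((1 - 1 / 3 : NNReal) : ℝ≥0∞) = 2 / 3 := by
    rw [ENNReal.coe_sub, ENNReal.coe_div (by norm_num), ENNReal.coe_one, ENNReal.coe_ofNat]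
    exact ENNReal.sub_eq_of_eq_add (by norm_num) hadd.symm
  rw [PMF.bind_apply, tsum_bool]
  simp only [PMF.bernoulli_apply, Bool.cond_true, Bool.cond_false, hsub, if_true,
    Bool.false_eq_true, if_false]
  by_cases hcond : θ < G.degree u ∨ G.degree u ≤ j
  · have hno : ¬(G.degree u ≤ θ ∧ j < G.degree u ∧ nbr u j = v) := by
      rintro ⟨h1, h2, -⟩
      rcases hcond with h | h
      · exact absurd h1 (not_le.mpr h)
      · exact absurd h2 (not_lt.mpr h)
    rw [if_neg hno]
    simp [hcond, PMF.pure_apply]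
  · push_neg at hcond
    obtain ⟨h1, h2⟩ := hcond
    have hc : (θ < G.degree u ∨ G.degree u ≤ j) = False :=
      eq_false (by rw [not_or]; exact ⟨not_lt.mpr h1, not_le.mpr h2⟩)
    simp only [hc, if_false]
    have hpure : (PMF.pure (some (u, nbr u j))) (some (v, w)) = 0 := by
      rw [PMF.pure_apply, if_neg]
      intro h
      have : v = u := by injection h with h'; exact congrArg Prod.fst h'
      exact absurd h1 (not_le.mpr (this ▸ hheavy))
    rw [hpure, mul_zero, add_zero]
    by_cases hz : nbr u j = v
    · rw [if_pos ⟨h1, h2, hz⟩]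
      have hcondv : θ < G.degree (nbr u j) := hz ▸ hheavy
      rw [dif_pos hcondv, algA G v w (nbr u j) hvw _, if_pos hz]
    · rw [if_neg (by rintro ⟨-, -, h⟩; exact hz h)]
      by_cases hh : θ < G.degree (nbr u j)
      · rw [dif_pos hh, algA G v w (nbr u j) hvw _, if_neg hz, mul_zero]
      · rw [dif_neg hh]
        simp [PMF.pure_apply]

private lemma algC {V : Type*} [Fintype V] [DecidableEq V]
    (G : SimpleGraph V) [DecidableRel G.Adj] (θ : ℕ) (hθ : 0 < θ) (nbr : V → ℕ → V)
    (hnbr : ∀ u : V, Set.BijOn (nbr u) (Set.Iio (G.degree u)) (G.neighborSet u))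
    (v w : V) (hvw : G.Adj v w) (hheavy : θ < G.degree v)
    (hp : (1 / 3 : NNReal) ≤ 1) (u : V) :
    ((PMF.uniformOfFinset (Finset.range θ) (Finset.nonempty_range_iff.mpr hθ.ne')).bind
      fun j => (PMF.bernoulli (1 / 3) hp).bind fun B =>
        if θ < G.degree u ∨ G.degree u ≤ j then PMF.pure none
        else
          if B then PMF.pure (some (u, nbr u j))
          else
            if h : θ < G.degree (nbr u j) then
              (PMF.uniformOfFinset (G.neighborFinset (nbr u j))
                (Finset.card_pos.mp (Nat.lt_of_le_of_lt (Nat.zero_le θ) h))).bind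
                fun w => PMF.pure (some (nbr u j, w))
            else PMF.pure none) (some (v, w))
    = if u ∈ (G.neighborFinset v).filter (fun x => G.degree x ≤ θ)
        then (θ : ℝ≥0∞)⁻¹ * (2 / 3 * (G.degree v : ℝ≥0∞)⁻¹) else 0 := by
  rw [PMF.bind_apply]
  have hB := algB G θ nbr v w hvw hheavy hp u
  rw [tsum_congr fun j => by rw [hB j]]
  by_cases hu : u ∈ (G.neighborFinset v).filter (fun x => G.degree x ≤ θ)
  · rw [if_pos hu]
    rw [Finset.mem_filter, SimpleGraph.mem_neighborFinset] at hu
    obtain ⟨hadj, hdeg⟩ := hu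
    obtain ⟨j₀, hj₀mem, hj₀⟩ := (hnbr u).surjOn (hadj.symm : v ∈ G.neighborSet u)
    have hj₀lt : j₀ < G.degree u := hj₀mem
    rw [tsum_eq_single j₀]
    · rw [PMF.uniformOfFinset_apply,
        if_pos (Finset.mem_range.mpr (lt_of_lt_of_le hj₀lt hdeg)), Finset.card_range,
        if_pos ⟨hdeg, hj₀lt, hj₀⟩]
    · intro b hb
      rw [if_neg, mul_zero]
      rintro ⟨-, hb2, hb3⟩
      exact hb ((hnbr u).injOn hb2 hj₀mem (hb3.trans hj₀.symm))
  · rw [if_neg hu]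
    refine ENNReal.tsum_eq_zero.mpr fun j => ?_
    rw [if_neg, mul_zero]
    rintro ⟨h1, h2, h3⟩
    have hvn : v ∈ G.neighborSet u := h3 ▸ (hnbr u).mapsTo h2
    exact hu (Finset.mem_filter.mpr
      ⟨(SimpleGraph.mem_neighborFinset G v u).mpr hvn.symm, h1⟩)

/-- **Algorithm 1** of Eden–Rosenbaum / Tětek–Thorup, as a probability mass function on
`Option (V × V)`: draw `u` uniformly from `V`, draw `j` uniformly from `{0, …, θ−1}`,
and draw `B ∈ {0,1}` with `P(B = 1) = 1/3`, independently; if `d(u) > θ` or `j ≥ d(u)`,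
output `none` (Fail); otherwise set `v = nbr u j`; if `B = 1`, output the directed edge
`(u, v)`; if `B = 0` and `v` is heavy (`d(v) > θ`), draw `w` uniformly from the neighbors
of `v` and output `(v, w)`; in all other cases output `none`. -/
noncomputable def alg1 {V : Type*} [Fintype V] [DecidableEq V] [Nonempty V]
    (G : SimpleGraph V) [DecidableRel G.Adj] (θ : ℕ) (hθ : 0 < θ)
    (nbr : V → ℕ → V) : PMF (Option (V × V)) :=
  (PMF.uniformOfFintype V).bind fun u =>
    (PMF.uniformOfFinset (Finset.range θ) (Finset.nonempty_range_iff.mpr hθ.ne')).bind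
      fun j =>
        (PMF.bernoulli (1 / 3) (by first | (rw [← NNReal.coe_le_coe]; norm_num) | (rw [div_le_one₀ (by norm_num)]; norm_num))).bind fun B =>
          if θ < G.degree u ∨ G.degree u ≤ j then PMF.pure none
          else
            if B then PMF.pure (some (u, nbr u j))
            else
              if h : θ < G.degree (nbr u j) then
                (PMF.uniformOfFinset (G.neighborFinset (nbr u j))
                  (Finset.card_pos.mp (Nat.lt_of_le_of_lt (Nat.zero_le θ) h))).bind
                  fun w => PMF.pure (some (nbr u j, w))
              else PMF.pure none

/-- For every heavy directed edge `(v,w)` of `G` (i.e., `d(v) > θ` and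
`w` a neighbor of `v`), the probability that Algorithm 1 outputs `(v,w)` equals exactly
`(2/3) · (d_ℓ(v)/d(v)) · (1/(nθ))`, where `θ = ⌈√(6m)⌉` and `d_ℓ(v)` is the number of
light neighbors of `v`. -/
theorem alg1_heavy_edge_prob {V : Type*} [Fintype V] [DecidableEq V] [Nonempty V]
    (G : SimpleGraph V) [DecidableRel G.Adj]
    (hm : 1 ≤ G.edgeFinset.card)
    (θ : ℕ) (hθ : θ = ⌈Real.sqrt (6 * (G.edgeFinset.card : ℝ))⌉₊)
    (nbr : V → ℕ → V)
    (hnbr : ∀ u : V, Set.BijOn (nbr u) (Set.Iio (G.degree u)) (G.neighborSet u))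
    (v w : V) (hvw : G.Adj v w) (hheavy : θ < G.degree v) :
    alg1 G θ
      (by subst hθ
          refine Nat.ceil_pos.mpr (Real.sqrt_pos.mpr ?_)
          exact_mod_cast Nat.mul_pos (by norm_num) hm)
      nbr (some (v, w))
      = (2 / 3)
          * ((((G.neighborFinset v).filter fun x => G.degree x ≤ θ).card : ℝ≥0∞)
              / (G.degree v : ℝ≥0∞))
          * (1 / ((Fintype.card V : ℝ≥0∞) * (θ : ℝ≥0∞))) := by
  classical
  simp only [alg1]
  rw [PMF.bind_apply]
  have h0 : 0 < θ := by
    subst hθ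
    refine Nat.ceil_pos.mpr (Real.sqrt_pos.mpr ?_)
    exact_mod_cast Nat.mul_pos (by norm_num) hm
  have hC := algC G θ h0 nbr hnbr v w hvw hheavy (by first | (rw [← NNReal.coe_le_coe]; norm_num) | (rw [div_le_one₀ (by norm_num)]; norm_num))
  rw [tsum_congr fun u => by rw [hC u]]
  rw [tsum_fintype]
  simp only [PMF.uniformOfFintype_apply]
  rw [← Finset.mul_sum, Finset.sum_ite_mem, Finset.univ_inter, Finset.sum_const,
    nsmul_eq_mul]
  have hn0 : (Fintype.card V : ℝ≥0∞) ≠ 0 := Nat.cast_ne_zero.mpr Fintype.card_ne_zero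
  have hnt : (Fintype.card V : ℝ≥0∞) ≠ ⊤ := ENNReal.natCast_ne_top _
  rw [one_div, ENNReal.mul_inv (Or.inl hn0) (Or.inl hnt), div_eq_mul_inv, div_eq_mul_inv]
  ring
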